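/- Let q be a probability (a real/NNReal in [0,1]) with q ≤ 1/3, and let k and i be natural numbers. Then the binomial distribution with 2k+i independent trials and success probability q assigns probability at most (1/2)^i to the outcome of exactly k+i successes; formally, (PMF.binomial q h (2k+i)) evaluated at k+i is at most (1/2)^i. -/

import Mathlib

/-- For a probability `q ≤ 1/3`, the binomial distribution with `2k+i` trials and success
probability `q` assigns probability at most `(1/2)^i` to exactly `k+i` successes. -/
theorem binomial_eq_succ_count_le_half_pow (q : ENNReal) (hq : q ≤ 1 / 3) (h : q ≤ 1)
    (k i : ℕ) :
    PMF.binomial q.toNNReal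
      (by simpa using ENNReal.toNNReal_mono ENNReal.one_ne_top h) (2 * k + i) ⟨k + i, by omega⟩ ≤ (1 / 2) ^ i := by
  have h' : q.toNNReal ≤ 1 := by simpa using ENNReal.toNNReal_mono ENNReal.one_ne_top h
  have hqc : ((q.toNNReal : NNReal) : ENNReal) = q := ENNReal.coe_toNNReal (ne_top_of_le_ne_top ENNReal.one_ne_top h)
  have happ : PMF.binomial q.toNNReal h' (2 * k + i) ⟨k + i, by omega⟩
      = q^(k+i) * (1-q)^k * ((2*k+i).choose (k+i)) := by
    rw [PMF.binomial_apply, hqc]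
    congr 2
    simp only [Fin.val_last]
    congr 1
    omega
  have happ2 : PMF.binomial q.toNNReal h' (2 * k + i) ⟨k, by omega⟩
      = q^k * (1-q)^(k+i) * ((2*k+i).choose k) := by
    rw [PMF.binomial_apply, hqc]
    congr 2
    simp only [Fin.val_last]
    congr 1
    omega
  have hC : ((2*k+i).choose (k+i)) = ((2*k+i).choose k) := by
    have := Nat.choose_symm (show k ≤ 2*k+i by omega)
    simpa [show 2*k+i-k = k+i by omega] using this
  have hle1 : q^k * (1-q)^(k+i) * ((2*k+i).choose k) ≤ 1 := by
    rw [← happ2]; exact (PMF.binomial q.toNNReal h' (2*k+i)).coe_le_one _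
  have hq2 : q ≤ (1-q)/2 := by
    rw [ENNReal.le_div_iff_mul_le (by norm_num) (by norm_num)]
    refine ENNReal.le_sub_of_add_le_right (ne_top_of_le_ne_top ENNReal.one_ne_top h) ?_
    calc q * 2 + q = q * 3 := by ring
    _ ≤ (1/3) * 3 := by gcongr
    _ = 1 := by rw [one_div, ENNReal.inv_mul_cancel (by norm_num) (by norm_num)]
  rw [happ, hC]
  calc q^(k+i) * (1-q)^k * ((2*k+i).choose k)
      = q^k * q^i * ((1-q)^k * ((2*k+i).choose k)) := by rw [pow_add]; ring
    _ ≤ q^k * ((1-q)/2)^i * ((1-q)^k * ((2*k+i).choose k)) := by gcongr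
    _ = (1/2)^i * (q^k * (1-q)^(k+i) * ((2*k+i).choose k)) := by
        rw [div_eq_mul_inv, mul_pow, pow_add (1-q), one_div]; ring
    _ ≤ (1/2)^i * 1 := by gcongr
    _ = (1/2)^i := mul_one _
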